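/- Let t > 0 and x, y, u, v ∈ ℝ^n with u ∈ prox_{t‖·‖₀}(x) and v ∈ prox_{t‖·‖₀}(y). If supp(u) ≠ supp(v), then ‖u − v‖₂ ≥ √(2t). -/

import Mathlib

noncomputable section

/-- The `ℓ₀` "norm": the number of nonzero components, as a real number. -/
def l0 {n : ℕ} (u : EuclideanSpace ℝ (Fin n)) : ℝ := ({i : Fin n | u i ≠ 0}).ncard

/-- The support of a vector. -/
def supp {n : ℕ} (u : EuclideanSpace ℝ (Fin n)) : Set (Fin n) := {i | u i ≠ 0}

/-- Membership `x ∈ prox_{t‖·‖₀}(y)`. -/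
def InProxL0 {n : ℕ} (t : ℝ) (x y : EuclideanSpace ℝ (Fin n)) : Prop :=
  ∀ z : EuclideanSpace ℝ (Fin n),
    (1 / (2 * t)) * ‖x - y‖ ^ 2 + l0 x ≤ (1 / (2 * t)) * ‖z - y‖ ^ 2 + l0 z


/-- Update one coordinate, staying in `EuclideanSpace`. -/
def updE {n : ℕ} (u : EuclideanSpace ℝ (Fin n)) (i : Fin n) (c : ℝ) :
    EuclideanSpace ℝ (Fin n) := WithLp.toLp 2 (Function.update u i c)

lemma updE_apply {n : ℕ} (u : EuclideanSpace ℝ (Fin n)) (i : Fin n) (c : ℝ) (j : Fin n) :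
    updE u i c j = if j = i then c else u j := by
  simp [updE, Function.update_apply]

lemma normsq {n : ℕ} (w : EuclideanSpace ℝ (Fin n)) : ‖w‖ ^ 2 = ∑ j, (w j) ^ 2 := by
  rw [EuclideanSpace.norm_eq, Real.sq_sqrt (by positivity)]
  simp [sq_abs]

lemma sum_update {n : ℕ} (u x : EuclideanSpace ℝ (Fin n)) (i : Fin n) (c : ℝ) :
    ‖updE u i c - x‖ ^ 2 = ‖u - x‖ ^ 2 - (u i - x i) ^ 2 + (c - x i) ^ 2 := by
  rw [normsq, normsq]
  have h1 : ∀ j, ((updE u i c - x) j) ^ 2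
      = Function.update (fun j => ((u - x : EuclideanSpace ℝ (Fin n)) j) ^ 2) i ((c - x i) ^ 2) j := by
    intro j
    by_cases hj : j = i
    · subst hj; simp [updE_apply]
    · simp [hj, updE_apply, Function.update_apply]
  simp_rw [h1]
  rw [Finset.sum_update_of_mem (Finset.mem_univ i),
    ← Finset.sum_erase_add Finset.univ _ (Finset.mem_univ i)]
  have h2 : ((u - x : EuclideanSpace ℝ (Fin n)) i) ^ 2 = (u i - x i) ^ 2 := by simp
  rw [h2]; ring_nf
  simp [Finset.sdiff_singleton_eq_erase]

lemma key {n : ℕ} {t : ℝ} (ht : 0 < t) {u x : EuclideanSpace ℝ (Fin n)}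
    (hu : InProxL0 t u x) {i : Fin n} (hi : u i ≠ 0) :
    Real.sqrt (2 * t) ≤ |u i| := by
  have hfin : ({j : Fin n | u j ≠ 0}).Finite := Set.toFinite _
  have hz2 := hu (updE u i (x i))
  rw [sum_update] at hz2
  have hl2 : l0 (updE u i (x i)) ≤ l0 u := by
    unfold l0
    have hsub : {j : Fin n | updE u i (x i) j ≠ 0} ⊆ {j | u j ≠ 0} := by
      intro j hj
      by_cases hji : j = i
      · simpa [hji] using hi
      · simpa [updE_apply, hji] using hj
    exact_mod_cast Nat.cast_le.mpr (Set.ncard_le_ncard hsub hfin)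
  have hpos : 0 < 1 / (2 * t) := by positivity
  have h2t : (0:ℝ) < 2 * t := by linarith
  have h1 : (1 / (2 * t)) * (u i - x i) ^ 2 ≤ 0 := by linarith [hz2, hl2]
  have h1' : (2 * t) * ((1 / (2 * t)) * (u i - x i) ^ 2) = (u i - x i) ^ 2 := by
    field_simp
  have h2 : (u i - x i) ^ 2 ≤ 0 := by
    have := mul_le_mul_of_nonneg_left h1 h2t.le
    rw [mul_zero] at this
    linarith [h1']
  have hd0 : (u i - x i) ^ 2 = 0 := le_antisymm h2 (sq_nonneg _)
  have heq : u i = x i := by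
    have := pow_eq_zero_iff (two_ne_zero) |>.mp hd0
    linarith [this]
  have hz1 := hu (updE u i 0)
  rw [sum_update] at hz1
  have hl1 : l0 (updE u i 0) + 1 = l0 u := by
    unfold l0
    have hs : {j : Fin n | updE u i 0 j ≠ 0} = {j | u j ≠ 0} \ {i} := by
      ext j; by_cases hji : j = i <;> simp [updE_apply, hji]
    rw [hs]
    have := Set.ncard_diff_singleton_add_one (show i ∈ {j : Fin n | u j ≠ 0} from hi) hfin
    exact_mod_cast this
  rw [hd0] at hz1
  have h5 : 1 ≤ (1 / (2 * t)) * (x i) ^ 2 := by linarith [hz1, hl1]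
  have hsq : 2 * t ≤ (x i) ^ 2 := by
    have h6 := mul_le_mul_of_nonneg_left h5 h2t.le
    rw [mul_one] at h6
    have h7 : (2 * t) * ((1 / (2 * t)) * (x i) ^ 2) = (x i) ^ 2 := by field_simp
    linarith [h6, h7]
  calc Real.sqrt (2 * t) ≤ Real.sqrt ((x i)^2) := Real.sqrt_le_sqrt hsq
    _ = |x i| := Real.sqrt_sq_eq_abs _
    _ = |u i| := by rw [heq]

/-- If `t > 0`, `u ∈ prox_{t‖·‖₀}(x)`, `v ∈ prox_{t‖·‖₀}(y)` and
`supp(u) ≠ supp(v)`, then `‖u − v‖₂ ≥ √(2t)`. -/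
theorem stmt11 (n : ℕ) (t : ℝ) (ht : 0 < t)
    (x y u v : EuclideanSpace ℝ (Fin n))
    (hu : InProxL0 t u x) (hv : InProxL0 t v y)
    (hsupp : supp u ≠ supp v) :
    Real.sqrt (2 * t) ≤ ‖u - v‖ := by
  have hdiff : ∃ i : Fin n, (u i ≠ 0 ∧ v i = 0) ∨ (v i ≠ 0 ∧ u i = 0) := by
    by_contra h
    push_neg at h
    apply hsupp
    ext i
    have hi := h i
    simp only [supp, Set.mem_setOf_eq]
    tauto
  obtain ⟨i, hi⟩ := hdiff
  have hbound : Real.sqrt (2 * t) ≤ |u i - v i| := by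
    rcases hi with ⟨h1, h2⟩ | ⟨h1, h2⟩
    · rw [h2, sub_zero]; exact key ht hu h1
    · rw [h2, zero_sub, abs_neg]; exact key ht hv h1
  refine hbound.trans ?_
  have h3 : |u i - v i| = |((u - v : EuclideanSpace ℝ (Fin n)) i)| := by simp
  rw [h3]
  have hle : |((u - v : EuclideanSpace ℝ (Fin n)) i)| ^ 2 ≤ ‖u - v‖ ^ 2 := by
    rw [normsq]
    have := Finset.single_le_sum (f := fun j => ((u - v : EuclideanSpace ℝ (Fin n)) j) ^ 2)
      (fun j _ => by positivity) (Finset.mem_univ i)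
    simpa [sq_abs] using this
  calc |((u - v : EuclideanSpace ℝ (Fin n)) i)|
      = Real.sqrt (|((u - v : EuclideanSpace ℝ (Fin n)) i)| ^ 2) := by
        rw [Real.sqrt_sq (abs_nonneg _)]
    _ ≤ Real.sqrt (‖u - v‖ ^ 2) := Real.sqrt_le_sqrt hle
    _ = ‖u - v‖ := Real.sqrt_sq (norm_nonneg _)

end
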